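/- Let L_t(\sigma) = (R + B^T Z_{t+1} B + \sigma^2 B^T Z_{t+1} B)^{-1} B^T Z_{t+1} A be the fully observable LQS feedback gain with control-dependent noise scaling \sigma (with C = \sigma B and Z^e dropped), where R is symmetric positive definite and Z_{t+1} symmetric positive semidefinite. If B^T Z_{t+1} A \ne 0 and B^T Z_{t+1} B \ne 0, then there exist \sigma_1 \ne \sigma_2 \ge 0 with L_t(\sigma_1) \ne L_t(\sigma_2); i.e., the feedback gain genuinely depends on the control-dependent noise magnitude. -/

import Mathlib

open Matrix
open scoped MatrixOrder

private lemma real_tr_mul_self_eq_zero {k l : ℕ} {A : Matrix (Fin k) (Fin l) ℝ}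
    (h : Aᵀ * A = 0) : A = 0 := by
  rw [← conjTranspose_eq_transpose_of_trivial] at h
  exact conjTranspose_mul_self_eq_zero.mp h

/-- the fully observable LQS feedback gain
`L(σ) = (R + Bᵀ Z B + σ² Bᵀ Z B)⁻¹ Bᵀ Z A` genuinely depends on the
control-dependent noise scaling σ. -/
theorem feedback_gain_depends_on_control_noise
    (n m : ℕ)
    (R : Matrix (Fin m) (Fin m) ℝ) (Z : Matrix (Fin n) (Fin n) ℝ)
    (A : Matrix (Fin n) (Fin n) ℝ) (B : Matrix (Fin n) (Fin m) ℝ)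
    (hR : R.PosDef) (hZ : Z.PosSemidef)
    (hBZA : Bᵀ * Z * A ≠ 0) (hBZB : Bᵀ * Z * B ≠ 0) :
    ∃ σ₁ σ₂ : ℝ, 0 ≤ σ₁ ∧ 0 ≤ σ₂ ∧ σ₁ ≠ σ₂ ∧
      (R + Bᵀ * Z * B + σ₁ ^ 2 • (Bᵀ * Z * B))⁻¹ * (Bᵀ * Z * A) ≠
      (R + Bᵀ * Z * B + σ₂ ^ 2 • (Bᵀ * Z * B))⁻¹ * (Bᵀ * Z * A) := by
  set G : Matrix (Fin m) (Fin n) ℝ := Bᵀ * Z * A with hG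
  set P : Matrix (Fin m) (Fin m) ℝ := Bᵀ * Z * B with hPdef
  have hP : P.PosSemidef := by
    have := hZ.conjTranspose_mul_mul_same B
    rwa [conjTranspose_eq_transpose_of_trivial] at this
  refine ⟨0, 1, le_refl 0, zero_le_one, zero_ne_one, ?_⟩
  intro h
  rw [show ((0:ℝ) ^ 2 • P) = 0 by simp, show ((1:ℝ) ^ 2 • P) = P by simp,
    add_zero] at h
  have hM₀ : (R + P).PosDef := hR.add_posSemidef hP
  have hM₁ : (R + P + P).PosDef := hM₀.add_posSemidef hP
  have hd₀ : IsUnit (R + P).det := (Matrix.isUnit_iff_isUnit_det _).mp hM₀.isUnit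
  have hd₁ : IsUnit (R + P + P).det := (Matrix.isUnit_iff_isUnit_det _).mp hM₁.isUnit
  set X : Matrix (Fin m) (Fin n) ℝ := (R + P)⁻¹ * G with hX
  have h0 : (R + P) * X = G := by
    rw [← Matrix.mul_assoc, Matrix.mul_nonsing_inv _ hd₀, Matrix.one_mul]
  have h1 : (R + P + P) * X = G := by
    rw [h, ← Matrix.mul_assoc, Matrix.mul_nonsing_inv _ hd₁, Matrix.one_mul]
  have hPX : P * X = 0 := by
    have := h1.trans h0.symm
    rw [Matrix.add_mul] at this
    simpa using this
  -- let S be the psd square root of Z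
  set S := CFC.sqrt Z with hS
  have hSS : S * S = Z := CFC.sqrt_mul_sqrt_self Z hZ.nonneg
  have hSsym : Sᵀ = S := by
    rw [← conjTranspose_eq_transpose_of_trivial]
    exact (CFC.sqrt_nonneg Z).posSemidef.isHermitian
  have hSBX : S * B * X = 0 := by
    apply real_tr_mul_self_eq_zero
    have : (S * B * X)ᵀ * (S * B * X) = Xᵀ * (P * X) := by
      rw [hPdef, ← hSS]
      simp [Matrix.transpose_mul, hSsym, Matrix.mul_assoc]
    rw [this, hPX, Matrix.mul_zero]
  have hZBX : Z * B * X = 0 := by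
    rw [← hSS, Matrix.mul_assoc S S B, Matrix.mul_assoc, hSBX, Matrix.mul_zero]
  have hXG : Xᵀ * G = 0 := by
    have hZsym : Zᵀ = Z := by
      rw [← conjTranspose_eq_transpose_of_trivial]; exact hZ.isHermitian
    have : Xᵀ * G = (Z * B * X)ᵀ * A := by
      rw [hG]
      simp [Matrix.transpose_mul, Matrix.mul_assoc, hZsym]
    rw [this, hZBX]
    simp
  have hXRX : Xᵀ * R * X = 0 := by
    have h2 : Xᵀ * ((R + P) * X) = 0 := by rw [h0, hXG]
    rw [Matrix.add_mul, Matrix.mul_add, hPX, Matrix.mul_zero, add_zero,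
      ← Matrix.mul_assoc] at h2
    exact h2
  -- let T be the psd square root of R
  set T := CFC.sqrt R with hT
  have hTT : T * T = R := CFC.sqrt_mul_sqrt_self R hR.posSemidef.nonneg
  have hTsym : Tᵀ = T := by
    rw [← conjTranspose_eq_transpose_of_trivial]
    exact (CFC.sqrt_nonneg R).posSemidef.isHermitian
  have hTX : T * X = 0 := by
    apply real_tr_mul_self_eq_zero
    have : (T * X)ᵀ * (T * X) = Xᵀ * R * X := by
      rw [← hTT]
      simp [Matrix.transpose_mul, hTsym, Matrix.mul_assoc]
    rw [this, hXRX]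
  have hRX : R * X = 0 := by
    rw [← hTT, Matrix.mul_assoc, hTX, Matrix.mul_zero]
  have hX0 : X = 0 := by
    have hdR : IsUnit R.det := (Matrix.isUnit_iff_isUnit_det _).mp hR.isUnit
    calc X = R⁻¹ * (R * X) := by
            rw [← Matrix.mul_assoc, Matrix.nonsing_inv_mul _ hdR, Matrix.one_mul]
      _ = 0 := by rw [hRX, Matrix.mul_zero]
  have : G = 0 := by rw [← h0, hX0, Matrix.mul_zero]
  exact hBZA this
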